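/- arXiv:1905.00074 — 2 statements merged into one kernel-verified Lean document; each statement's English description precedes it below -/
import Mathlib

section
/- (Generalized Max Noether inequality) Let n ≥ 2 and let d, m₁, …, m_s be integers with d ≥ mᵢ ≥ 0 for all i. Suppose (n+1)d − Σᵢ mᵢ = c + 2 and (n−1)d² − Σᵢ mᵢ² = c + e for integers c, e with −2 ≤ c ≤ 1 and −2 ≤ e ≤ 1; if d = 1 additionally assume (n−1)d² − Σᵢ mᵢ² < 0. Then there exist n+1 distinct indices i₁ < ⋯ < i_{n+1} in {1,…,s} with m_{i₁} + ⋯ + m_{i_{n+1}} > (n−1)d. -/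
open Finset

lemma exists_top_subset {α : Type*} [DecidableEq α] (f : α → ℤ) :
    ∀ (k : ℕ) (s : Finset α), k ≤ s.card →
      ∃ T ⊆ s, T.card = k ∧ ∀ i ∈ T, ∀ j ∈ s, j ∉ T → f j ≤ f i := by
  intro k
  induction k with
  | zero => intro s _; exact ⟨∅, empty_subset s, rfl, by simp⟩
  | succ k ih =>
    intro s hs
    have hne : s.Nonempty := card_pos.mp (by omega)
    obtain ⟨a, ha, hamax⟩ := s.exists_max_image f hne
    have hcard : k ≤ (s.erase a).card := by
      rw [card_erase_of_mem ha]; omega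
    obtain ⟨T, hTsub, hTcard, hTtop⟩ := ih (s.erase a) hcard
    refine ⟨insert a T, ?_, ?_, ?_⟩
    · exact insert_subset ha (hTsub.trans (erase_subset a s))
    · rw [card_insert_of_notMem (fun h => (mem_erase.mp (hTsub h)).1 rfl), hTcard]
    · intro i hi j hj hjT
      rcases mem_insert.mp hi with rfl | hiT
      · exact hamax j hj
      · exact hTtop i hiT j (mem_erase.mpr ⟨fun h => hjT (h ▸ mem_insert_self a T), hj⟩)
          (fun h => hjT (mem_insert_of_mem h))


/-- Generalized Max Noether inequality: under the numerical hypotheses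
`adeg D = c + 2` and `⟨D,D⟩ = c + e` with `-2 ≤ c, e ≤ 1`, `d ≥ mᵢ ≥ 0`
(and `⟨D,D⟩ < 0` if `d = 1`), there exist `n+1` distinct indices (or all `s`
indices, if `s < n+1`) whose multiplicities sum to more than `(n-1)d`. -/
theorem generalized_noether_inequality (n s : ℕ) (hn : 2 ≤ n)
    (d c e : ℤ) (m : Fin s → ℤ)
    (hm0 : ∀ i, 0 ≤ m i) (hmd : ∀ i, m i ≤ d)
    (hadeg : ((n : ℤ) + 1) * d - ∑ i, m i = c + 2)
    (hself : ((n : ℤ) - 1) * d ^ 2 - ∑ i, (m i) ^ 2 = c + e)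
    (hc : -2 ≤ c) (hc' : c ≤ 1) (he : -2 ≤ e) (he' : e ≤ 1)
    (hd1 : d = 1 → ((n : ℤ) - 1) * d ^ 2 - ∑ i, (m i) ^ 2 < 0) :
    ∃ T : Finset (Fin s), T.card = min (n + 1) s ∧
      ((n : ℤ) - 1) * d < ∑ i ∈ T, m i := by
  have hn' : (2 : ℤ) ≤ (n : ℤ) := by exact_mod_cast hn
  -- Step 1: d ≥ 1
  have hd : 1 ≤ d := by
    by_contra h
    push_neg at h
    have h' : d ≤ 0 := by omega
    have hz : ∀ i, m i = 0 := fun i => le_antisymm ((hmd i).trans h') (hm0 i)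
    have hA : ∑ i, m i = 0 := Finset.sum_eq_zero (fun i _ => hz i)
    have hB : ∑ i, (m i) ^ 2 = 0 := Finset.sum_eq_zero (fun i _ => by rw [hz i]; ring)
    rw [hA] at hadeg
    rw [hB] at hself
    -- (n+1)*d = c+2 ≥ 0, d ≤ 0, n+1 > 0 ⟹ d = 0 ⟹ c = -2 ⟹ (n-1)d² = 0 = -2 + e ⟹ e = 2
    have h1 : ((n : ℤ) + 1) * d ≤ 0 :=
      mul_nonpos_iff.mpr (Or.inl ⟨by linarith, h'⟩)
    have hc2 : c = -2 := by linarith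
    have hd0 : d = 0 := by
      rcases lt_or_eq_of_le h' with hlt | heq
      · exfalso
        have : ((n : ℤ) + 1) * d ≤ 3 * d := by nlinarith
        linarith
      · omega
    rw [hd0] at hself
    simp at hself
    omega
  -- Step 2: key fact c + 3 ≤ 2 * d
  have hK : c + 3 ≤ 2 * d := by
    rcases eq_or_lt_of_le hd with heq | hlt
    · -- d = 1
      have hd1' := hd1 heq.symm
      have hsq : ∑ i, (m i) ^ 2 = ∑ i, m i := by
        apply Finset.sum_congr rfl
        intro i _
        have h0 := hm0 i
        have h1 := hmd i
        rw [← heq] at h1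
        interval_cases h : m i <;> ring
      rw [hsq, ← heq] at hself hd1'
      rw [← heq] at hadeg ⊢
      linarith
    · linarith
  rcases le_or_gt s (n + 1) with hs | hs
  · -- all indices
    refine ⟨Finset.univ, ?_, ?_⟩
    · simp [Nat.min_eq_right hs]
    · have hexp : ((n : ℤ) + 1) * d = ((n : ℤ) - 1) * d + 2 * d := by ring
      linarith
  · -- s > n + 1 : take top n+1 multiplicities
    obtain ⟨T, -, hTcard, hTtop⟩ :=
      exists_top_subset m (n + 1) Finset.univ (by simp; omega)
    refine ⟨T, by rw [hTcard]; omega, ?_⟩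
    by_contra hS
    push_neg at hS
    have hTne : T.Nonempty := card_pos.mp (by omega)
    obtain ⟨i₀, hi₀, hmin⟩ := T.exists_min_image m hTne
    set t := m i₀ with ht
    have hsplit : ∑ i ∈ T, m i + ∑ i ∈ Tᶜ, m i = ∑ i, m i :=
      Finset.sum_add_sum_compl T m
    have hsplitsq : ∑ i ∈ T, (m i) ^ 2 + ∑ i ∈ Tᶜ, (m i) ^ 2 = ∑ i, (m i) ^ 2 :=
      Finset.sum_add_sum_compl T _
    have hexp : ((n : ℤ) + 1) * d = ((n : ℤ) - 1) * d + 2 * d := by ring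
    have htail1 : 1 ≤ ∑ i ∈ Tᶜ, m i := by linarith
    -- some tail index has m j ≥ 1, so t ≥ 1
    obtain ⟨j, hj, hj1⟩ : ∃ j ∈ Tᶜ, (0 : ℤ) < m j := by
      apply Finset.exists_lt_of_sum_lt (f := fun _ => (0 : ℤ))
      simp
      linarith
    have ht1 : 1 ≤ t := by
      have := hTtop i₀ hi₀ j (mem_univ j) (Finset.mem_compl.mp hj)
      omega
    -- quadratic bounds
    have hTsum : ∑ i ∈ T, (m i) ^ 2 ≤ (d + t) * (∑ i ∈ T, m i) - ((n : ℤ) + 1) * (d * t) := by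
      have h1 : ∑ i ∈ T, (m i) ^ 2 ≤ ∑ i ∈ T, ((d + t) * m i - d * t) := by
        apply Finset.sum_le_sum
        intro i hi
        nlinarith [mul_nonneg (sub_nonneg.mpr (hmd i)) (sub_nonneg.mpr (hmin i hi))]
      calc ∑ i ∈ T, (m i) ^ 2 ≤ ∑ i ∈ T, ((d + t) * m i - d * t) := h1
        _ = (d + t) * (∑ i ∈ T, m i) - ((n : ℤ) + 1) * (d * t) := by
            rw [Finset.sum_sub_distrib, ← Finset.mul_sum, Finset.sum_const, hTcard]
            ring
    have hCsum : ∑ i ∈ Tᶜ, (m i) ^ 2 ≤ t * ∑ i ∈ Tᶜ, m i := by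
      rw [Finset.mul_sum]
      apply Finset.sum_le_sum
      intro i hi
      have h1 := hTtop i₀ hi₀ i (mem_univ i) (Finset.mem_compl.mp hi)
      nlinarith [hm0 i]
    -- assemble the contradiction
    have e1 : d * (∑ i ∈ T, m i) ≤ d * (((n : ℤ) - 1) * d) :=
      mul_le_mul_of_nonneg_left hS (by linarith)
    have e2 : 0 ≤ (t - 1) * (c + 2) := mul_nonneg (by linarith) (by linarith)
    have e3 : t * ((∑ i ∈ T, m i) + (∑ i ∈ Tᶜ, m i)) = t * (((n : ℤ) + 1) * d - c - 2) := by
      have hA : ∑ i, m i = ((n : ℤ) + 1) * d - c - 2 := by linarith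
      rw [hsplit, hA]
    nlinarith [hTsum, hCsum, hsplitsq, hself, e1, e2, e3, he', ht1]
end

section
/- The numerical (−1)-class conditions are Cremona-invariant: if D = dH − Σ mᵢEᵢ satisfies (n−1)d² − Σ mᵢ² = −1 and (n+1)d − Σ mᵢ = 1, then Cr(D) satisfies the same two conditions. -/
open Finset

/-- A divisor class `dH - Σ mᵢ Eᵢ` on `X_{n,s}` is represented by the pair `(d, m)`. -/
abbrev PicClass (s : ℕ) := ℤ × (Fin s → ℤ)

/-- Dolgachev–Mukai pairing: `⟨H,H⟩ = n-1`, `⟨H,Eᵢ⟩ = 0`, `⟨Eᵢ,Eⱼ⟩ = -δᵢⱼ`. -/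
def dmPair (n s : ℕ) (D F : PicClass s) : ℤ :=
  ((n : ℤ) - 1) * D.1 * F.1 - ∑ i, D.2 i * F.2 i

/-- The Cremona coefficient `k = m₁ + ⋯ + m_{n+1} - (n-1)d`. -/
def crK (n s : ℕ) (D : PicClass s) : ℤ :=
  (∑ i ∈ Finset.univ.filter (fun i : Fin s => i.val < n + 1), D.2 i) - ((n : ℤ) - 1) * D.1

/-- The standard Cremona transformation on `Pic(X_{n,s})`. -/
def cremona (n s : ℕ) (D : PicClass s) : PicClass s :=
  (D.1 - crK n s D, fun i => if i.val < n + 1 then D.2 i - crK n s D else D.2 i)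

/-- Anticanonical degree `adeg(D) = (n+1)d - Σ mᵢ`. -/
def adeg (n s : ℕ) (D : PicClass s) : ℤ :=
  ((n : ℤ) + 1) * D.1 - ∑ i, D.2 i

/-- The canonical class `K = -(n+1)H + (n-1)ΣEᵢ`, written as `dH - Σ mᵢEᵢ`. -/
def canonicalClass (n s : ℕ) : PicClass s :=
  (-((n : ℤ) + 1), fun _ => -((n : ℤ) - 1))

/-- The numerical `(-1)`-class conditions are invariant under the Cremona transformation. -/
theorem cremona_preserves_minus_one_conditions (n s : ℕ) (hn : 2 ≤ n) (hs : n + 1 ≤ s)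
    (D : PicClass s)
    (hself : ((n : ℤ) - 1) * D.1 ^ 2 - ∑ i, (D.2 i) ^ 2 = -1)
    (hadeg : ((n : ℤ) + 1) * D.1 - ∑ i, D.2 i = 1) :
    ((n : ℤ) - 1) * (cremona n s D).1 ^ 2 - ∑ i, ((cremona n s D).2 i) ^ 2 = -1 ∧
    ((n : ℤ) + 1) * (cremona n s D).1 - ∑ i, (cremona n s D).2 i = 1 := by
  set T : Finset (Fin s) := Finset.univ.filter (fun i : Fin s => i.val < n + 1) with hT
  set k : ℤ := crK n s D with hk
  have hcard : T.card = n + 1 := by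
    rw [hT, Finset.card_filter,
      Fin.sum_univ_eq_sum_range (fun i => if i < n + 1 then 1 else 0), ← Finset.card_filter]
    have : filter (fun i => i < n + 1) (range s) = range (n + 1) := by
      ext x; simp; omega
    rw [this, Finset.card_range]
  have hST : ∑ i ∈ T, D.2 i = k + ((n : ℤ) - 1) * D.1 := by
    simp only [hk, crK, ← hT]; ring
  have hsplit : ∀ f : Fin s → ℤ, ∑ i, f i =
      ∑ i ∈ T, f i + ∑ i ∈ univ.filter (fun i : Fin s => ¬ i.val < n + 1), f i := by
    intro f
    rw [hT, Finset.sum_filter_add_sum_filter_not]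
  have hsum : ∑ i, (cremona n s D).2 i = (∑ i, D.2 i) - ((n : ℤ) + 1) * k := by
    simp only [cremona]
    rw [Finset.sum_ite, ← hT, Finset.sum_sub_distrib, Finset.sum_const, hcard,
      hsplit (fun i => D.2 i)]
    ring
  have hsq : ∑ i, ((cremona n s D).2 i) ^ 2
      = (∑ i, (D.2 i) ^ 2) - 2 * k * (∑ i ∈ T, D.2 i) + ((n : ℤ) + 1) * k ^ 2 := by
    simp only [cremona]
    have : ∀ i : Fin s, (if (i : ℕ) < n + 1 then D.2 i - k else D.2 i) ^ 2
        = if (i : ℕ) < n + 1 then (D.2 i - k) ^ 2 else (D.2 i) ^ 2 := by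
      intro i; split <;> rfl
    simp only [← hk, this]
    rw [Finset.sum_ite, ← hT, hsplit (fun i => (D.2 i) ^ 2)]
    have : ∑ i ∈ T, (D.2 i - k) ^ 2
        = ∑ i ∈ T, (D.2 i) ^ 2 - 2 * k * (∑ i ∈ T, D.2 i) + ((n : ℤ) + 1) * k ^ 2 := by
      have h2 : ∀ i ∈ T, (D.2 i - k) ^ 2 = (D.2 i) ^ 2 - 2 * k * D.2 i + k ^ 2 := by
        intro i _; ring
      rw [Finset.sum_congr rfl h2, Finset.sum_add_distrib, Finset.sum_sub_distrib,
        Finset.sum_const, hcard, Finset.mul_sum]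
      ring
    rw [this]
    ring
  have hcrem1 : (cremona n s D).1 = D.1 - k := rfl
  constructor
  · rw [hcrem1, hsq, hST]
    linear_combination hself
  · rw [hcrem1, hsum]
    linear_combination hadeg
end
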